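/- With Φ_{n,k} as above (n > 0), the inner product of f with Φ_{n,k} in L²(0,1) vanishes: ∫₀¹ f(u)·Φ_{n,k}(u) du = 0. -/

import Mathlib

open MeasureTheory intervalIntegral

/-- `h(t) = ∫₀ᵗ f(u)² du`. -/
noncomputable def hFun (f : ℝ → ℝ) (t : ℝ) : ℝ := ∫ u in (0:ℝ)..t, (f u) ^ 2

/-- Left endpoint `l_{n,k} = 2k·2⁻ⁿ` of the dyadic support `S_{n,k}`. -/
noncomputable def lPt (n k : ℕ) : ℝ := (2 * k : ℝ) / 2 ^ n

/-- Midpoint `m_{n,k} = (2k+1)·2⁻ⁿ`. -/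
noncomputable def mPt (n k : ℕ) : ℝ := (2 * k + 1 : ℝ) / 2 ^ n

/-- Right endpoint `r_{n,k} = 2(k+1)·2⁻ⁿ`. -/
noncomputable def rPt (n k : ℕ) : ℝ := (2 * k + 2 : ℝ) / 2 ^ n

/-- `L_{n,k} = √((h r − h m)/((h r − h l)(h m − h l)))`. -/
noncomputable def Lcoef (f : ℝ → ℝ) (n k : ℕ) : ℝ :=
  Real.sqrt ((hFun f (rPt n k) - hFun f (mPt n k)) /
    ((hFun f (rPt n k) - hFun f (lPt n k)) * (hFun f (mPt n k) - hFun f (lPt n k))))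

/-- `R_{n,k} = √((h m − h l)/((h r − h l)(h r − h m)))`. -/
noncomputable def Rcoef (f : ℝ → ℝ) (n k : ℕ) : ℝ :=
  Real.sqrt ((hFun f (mPt n k) - hFun f (lPt n k)) /
    ((hFun f (rPt n k) - hFun f (lPt n k)) * (hFun f (rPt n k) - hFun f (mPt n k))))

/-- The auxiliary Haar-like family `Φ_{n,k}`: `Φ_{0,0} = f/√(h 1 − h 0)` and, for
`n > 0`, `L_{n,k}·f` on `[l,m)`, `−R_{n,k}·f` on `[m,r)`, `0` elsewhere. -/
noncomputable def Phi (f : ℝ → ℝ) (n k : ℕ) (t : ℝ) : ℝ :=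
  if n = 0 then f t / Real.sqrt (hFun f 1 - hFun f 0)
  else if lPt n k ≤ t ∧ t < mPt n k then Lcoef f n k * f t
  else if mPt n k ≤ t ∧ t < rPt n k then -(Rcoef f n k * f t)
  else 0

/-- for `n ≥ 1`, the inner product of `f` with `Φ_{n,k}` in
`L²(0,1)` vanishes: `∫₀¹ f·Φ_{n,k} = 0`. -/
theorem inner_f_Phi_eq_zero
    (f : ℝ → ℝ) (hfm : Measurable f)
    (hf2 : IntervalIntegrable (fun u => (f u) ^ 2) MeasureTheory.volume 0 1)
    (hmono : StrictMonoOn (hFun f) (Set.Icc 0 1)) :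
    ∀ n k : ℕ, 1 ≤ n → k < 2 ^ (n - 1) →
      ∫ u in (0:ℝ)..1, f u * Phi f n k u = 0 := by
  intro n k hn hk
  have hn0 : n ≠ 0 := by omega
  set l := lPt n k with hl_def
  set m := mPt n k with hm_def
  set r := rPt n k with hr_def
  set L := Lcoef f n k with hL_def
  set R := Rcoef f n k with hR_def
  have hNpos : (0:ℝ) < 2 ^ n := by positivity
  have hl0 : (0:ℝ) ≤ l := by rw [hl_def, lPt]; positivity
  have hlm : l < m := by
    rw [hl_def, hm_def, lPt, mPt]
    exact (div_lt_div_iff₀ hNpos hNpos).mpr (by nlinarith)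
  have hmr : m < r := by
    rw [hm_def, hr_def, mPt, rPt]
    exact (div_lt_div_iff₀ hNpos hNpos).mpr (by nlinarith)
  have hr1 : r ≤ 1 := by
    rw [hr_def, rPt, div_le_one hNpos]
    have h2 : 2 * (k + 1) ≤ 2 ^ n := by
      have : k + 1 ≤ 2 ^ (n - 1) := hk
      calc 2 * (k + 1) ≤ 2 * 2 ^ (n - 1) := by omega
        _ = 2 ^ n := by rw [← pow_succ']; congr 1; omega
    have := (Nat.cast_le (α := ℝ)).mpr h2
    push_cast at this ⊢
    linarith
  have hm1 : m ≤ 1 := le_of_lt (lt_of_lt_of_le hmr hr1)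
  -- integrability
  have hsubI : ∀ a b : ℝ, 0 ≤ a → a ≤ b → b ≤ 1 →
      IntervalIntegrable (fun u => (f u) ^ 2) volume a b := by
    intro a b ha hab hb
    apply hf2.mono_set
    rw [Set.uIcc_of_le (by norm_num : (0:ℝ) ≤ 1)]
    exact Set.uIcc_subset_Icc ⟨ha, le_trans hab hb⟩ ⟨le_trans ha hab, hb⟩
  have hf2' : IntegrableOn (fun u => (f u) ^ 2) (Set.Ioc 0 1) volume :=
    (intervalIntegrable_iff_integrableOn_Ioc_of_le (by norm_num)).1 hf2
  -- h differences as integrals over Ioo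
  have hdiff : ∀ a b : ℝ, 0 ≤ a → a ≤ b → b ≤ 1 →
      hFun f b - hFun f a = ∫ u in Set.Ioo a b, (f u) ^ 2 := by
    intro a b ha hab hb
    rw [hFun, hFun,
      intervalIntegral.integral_interval_sub_left (hsubI 0 b le_rfl (le_trans ha hab) hb)
        (hsubI 0 a le_rfl ha (le_trans hab hb)),
      intervalIntegral.integral_of_le hab, MeasureTheory.integral_Ioc_eq_integral_Ioo]
  -- positivity of the h-increments
  have hlI : l ∈ Set.Icc (0:ℝ) 1 := ⟨hl0, by linarith⟩
  have hmI : m ∈ Set.Icc (0:ℝ) 1 := ⟨by linarith, hm1⟩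
  have hrI : r ∈ Set.Icc (0:ℝ) 1 := ⟨by linarith, hr1⟩
  have ha_pos : 0 < hFun f m - hFun f l := sub_pos.mpr (hmono hlI hmI hlm)
  have hb_pos : 0 < hFun f r - hFun f m := sub_pos.mpr (hmono hmI hrI hmr)
  set a := hFun f m - hFun f l with ha_def
  set b := hFun f r - hFun f m with hb_def
  have hab_eq : hFun f r - hFun f l = a + b := by rw [ha_def, hb_def]; ring
  -- the nice representative
  set φ : ℝ → ℝ := fun u =>
    (Set.Ioo l m).indicator (fun u => L * (f u) ^ 2) u +
    (Set.Ioo m r).indicator (fun u => -(R * (f u) ^ 2)) u with hφ_def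
  have hae : (fun u => f u * Phi f n k u) =ᵐ[volume] φ := by
    have hsub : {u | f u * Phi f n k u ≠ φ u} ⊆ {l, m} := by
      intro u hu
      by_contra hne
      simp only [Set.mem_insert_iff, Set.mem_singleton_iff, not_or] at hne
      apply hu
      simp only [hφ_def, Phi, if_neg hn0, ← hl_def, ← hm_def, ← hr_def, ← hL_def, ← hR_def]
      rcases lt_trichotomy u m with hum | hum | hum
      · rcases lt_or_ge u l with hul | hul
        · rw [if_neg (by push_neg; intro h; linarith),
            if_neg (by push_neg; intro h; linarith)]
          rw [Set.indicator_of_notMem (by simp [Set.mem_Ioo]; intro h; linarith),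
            Set.indicator_of_notMem (by simp [Set.mem_Ioo]; intro h; linarith)]
          ring
        · have hul' : l < u := lt_of_le_of_ne hul (Ne.symm hne.1)
          rw [if_pos ⟨hul, hum⟩,
            Set.indicator_of_mem (Set.mem_Ioo.mpr ⟨hul', hum⟩),
            Set.indicator_of_notMem (by simp [Set.mem_Ioo]; intro h; linarith)]
          ring
      · exact absurd hum hne.2
      · rcases lt_or_ge u r with hur | hur
        · rw [if_neg (by push_neg; intro h; linarith), if_pos ⟨le_of_lt hum, hur⟩,
            Set.indicator_of_notMem (by simp [Set.mem_Ioo]; intro h; linarith),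
            Set.indicator_of_mem (Set.mem_Ioo.mpr ⟨hum, hur⟩)]
          ring
        · rw [if_neg (by push_neg; intro h; linarith),
            if_neg (by push_neg; intro h; linarith),
            Set.indicator_of_notMem (by simp [Set.mem_Ioo]; intro h; linarith),
            Set.indicator_of_notMem (by simp [Set.mem_Ioo]; intro h; linarith)]
          ring
    exact measure_mono_null hsub ((Set.toFinite _).measure_zero volume)
  rw [intervalIntegral.integral_congr_ae (hae.mono fun x hx => fun _ => hx)]
  rw [intervalIntegral.integral_of_le (by norm_num : (0:ℝ) ≤ 1)]
  have hint1 : IntegrableOn ((Set.Ioo l m).indicator (fun u => L * (f u) ^ 2))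
      (Set.Ioc 0 1) volume :=
    ((hf2'.const_mul L).indicator measurableSet_Ioo)
  have hindneg : (Set.Ioo m r).indicator (fun u => -(R * (f u) ^ 2)) =
      fun u => -((Set.Ioo m r).indicator (fun u => R * (f u) ^ 2) u) := by
    funext u
    by_cases hu : u ∈ Set.Ioo m r <;> simp [Set.indicator, hu]
  have hint2 : IntegrableOn ((Set.Ioo m r).indicator (fun u => -(R * (f u) ^ 2)))
      (Set.Ioc 0 1) volume := by
    rw [hindneg]
    exact ((hf2'.const_mul R).indicator measurableSet_Ioo).neg
  rw [hφ_def]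
  rw [MeasureTheory.integral_add hint1 hint2]
  have hs1 : Set.Ioc 0 1 ∩ Set.Ioo l m = Set.Ioo l m :=
    Set.inter_eq_self_of_subset_right (fun x hx =>
      ⟨by linarith [hx.1, hx.2], by linarith [hx.2]⟩)
  have hs2 : Set.Ioc 0 1 ∩ Set.Ioo m r = Set.Ioo m r :=
    Set.inter_eq_self_of_subset_right (fun x hx =>
      ⟨by linarith [hx.1], by linarith [hx.2]⟩)
  rw [MeasureTheory.setIntegral_indicator measurableSet_Ioo,
    MeasureTheory.setIntegral_indicator measurableSet_Ioo, hs1, hs2,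
    MeasureTheory.integral_const_mul, MeasureTheory.integral_neg,
    MeasureTheory.integral_const_mul]
  rw [← hdiff l m hl0 (le_of_lt hlm) hm1, ← hdiff m r (by linarith) (le_of_lt hmr) hr1,
    ← ha_def, ← hb_def]
  -- algebra: L * a = R * b
  have hLa : L * a = Real.sqrt (a * b / (a + b)) := by
    rw [hL_def, Lcoef, ← hl_def, ← hm_def, ← hr_def, ← ha_def, hab_eq]
    rw [show a = Real.sqrt (a ^ 2) from (Real.sqrt_sq (le_of_lt ha_pos)).symm]
    rw [← Real.sqrt_mul (by positivity)]
    congr 1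
    field_simp
    rw [Real.sq_sqrt (sq_nonneg a), hb_def]
    ring
  have hRb : R * b = Real.sqrt (a * b / (a + b)) := by
    rw [hR_def, Rcoef, ← hl_def, ← hm_def, ← hr_def, ← ha_def, ← hb_def, hab_eq]
    rw [show b = Real.sqrt (b ^ 2) from (Real.sqrt_sq (le_of_lt hb_pos)).symm]
    rw [← Real.sqrt_mul (by positivity)]
    congr 1
    field_simp
    rw [Real.sq_sqrt (sq_nonneg b)]
  rw [hLa, ← hRb]
  ring
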